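/- Suppose λ1 ≥ m1·μ11 and Assumption A(I) holds. (a) If q1ᵃ − κ > r·λ2/θ2 + μ12·m2/θ1, then z* = m2, π* = 1, q1* = (λ1 − m1·μ11 − μ12·m2)/θ1, q2* = λ2/θ2, q1* − r·q2* > κ, and Ψ_1(q1*, q2*, m2) = (0, 0, 0). (b) If r·q2ᵃ > q1ᵃ − κ, then z* = 0, π* = 0, q1* = (λ1 − m1·μ11)/θ1, q2* = (λ2 − m2·μ22)/θ2 ≥ 0, q1* − r·q2* < κ, and Ψ_0(q1*, q2*, 0) = (0, 0, 0). -/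

import Mathlib

set_option maxHeartbeats 1600000 in
/-- Form of the stationary point in the regions `S⁺` and `S⁻`. -/
theorem stmt_19 (lam1 lam2 m1 m2 mu11 mu12 mu22 th1 th2 r kap : ℝ)
    (hlam1 : 0 < lam1) (hlam2 : 0 < lam2) (hm1 : 0 < m1) (hm2 : 0 < m2)
    (hmu11 : 0 < mu11) (hmu12 : 0 < mu12) (hmu22 : 0 < mu22)
    (hth1 : 0 < th1) (hth2 : 0 < th2) (hr : 0 < r) (hkap : 0 ≤ kap)
    (zb zs q1s q2s pis q1a q2a s2a : ℝ)
    (hzb : zb = (th2*(lam1 - m1*mu11) - r*th1*(lam2 - m2*mu22) - th1*th2*kap)/(r*th1*mu22 + th2*mu12))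
    (hzs : zs = min (max zb 0) m2)
    (hq1s : q1s = (lam1 - m1*mu11 - mu12*zs)/th1)
    (hq2s : q2s = (lam2 - mu22*(m2 - zs))/th2)
    (hpis : pis = mu12*zs/(mu12*zs + mu22*(m2 - zs)))
    (hq1a : q1a = max (lam1 - mu11*m1) 0 / th1)
    (hq2a : q2a = max (lam2 - mu22*m2) 0 / th2)
    (hs2a : s2a = max (m2 - lam2/mu22) 0)
    (hover : m1*mu11 ≤ lam1)
    (hAI : th1*(q1a - kap) ≥ mu12*s2a) :
    (q1a - kap > r*lam2/th2 + mu12*m2/th1 →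
      zs = m2 ∧ pis = 1 ∧
      q1s = (lam1 - m1*mu11 - mu12*m2)/th1 ∧ q2s = lam2/th2 ∧
      q1s - r*q2s > kap ∧
      lam1 - m1*mu11 - 1*(m2*mu12 + (m2 - m2)*mu22) - th1*q1s = 0 ∧
      lam2 - (1 - 1)*(m2*mu12 + (m2 - m2)*mu22) - th2*q2s = 0 ∧
      1*mu22*(m2 - m2) - (1 - 1)*mu12*m2 = 0) ∧
    (r*q2a > q1a - kap →
      zs = 0 ∧ pis = 0 ∧
      q1s = (lam1 - m1*mu11)/th1 ∧ q2s = (lam2 - m2*mu22)/th2 ∧ 0 ≤ q2s ∧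
      q1s - r*q2s < kap ∧
      lam1 - m1*mu11 - 0*((0:ℝ)*mu12 + (m2 - 0)*mu22) - th1*q1s = 0 ∧
      lam2 - (1 - 0)*((0:ℝ)*mu12 + (m2 - 0)*mu22) - th2*q2s = 0 ∧
      0*mu22*(m2 - 0) - (1 - 0)*mu12*(0:ℝ) = 0) := by
  have hq1a' : q1a = (lam1 - m1*mu11)/th1 := by
    rw [hq1a, max_eq_left (by linarith)]; ring_nf
  have hD : 0 < r*th1*mu22 + th2*mu12 := by positivity
  constructor
  · intro h
    rw [hq1a', gt_iff_lt,
      show (lam1 - m1*mu11)/th1 - kap = (lam1 - m1*mu11 - kap*th1)/th1 by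
        field_simp,
      div_add_div _ _ (ne_of_gt hth2) (ne_of_gt hth1),
      div_lt_div_iff₀ (by positivity) hth1] at h
    -- h : (r*lam2*th1 + th2*(mu12*m2)) * th1 < (lam1 - m1*mu11 - kap*th1) * (th2*th1)
    have hm2zb : m2 ≤ zb := by
      rw [hzb, le_div_iff₀ hD]
      nlinarith [mul_pos hth1 hth2]
    have hzsm2 : zs = m2 := by
      rw [hzs, min_eq_right (le_max_of_le_left hm2zb)]
    refine ⟨hzsm2, ?_, ?_, ?_, ?_, ?_, ?_, ?_⟩
    · rw [hpis, hzsm2]; field_simp; ring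
    · rw [hq1s, hzsm2]
    · rw [hq2s, hzsm2]; ring_nf
    · rw [hq1s, hq2s, hzsm2,
        show (lam1 - m1*mu11 - mu12*m2)/th1 - r*((lam2 - mu22*(m2 - m2))/th2)
            = (th2*(lam1 - m1*mu11 - mu12*m2) - r*th1*lam2)/(th1*th2) by
          field_simp; ring,
        gt_iff_lt, lt_div_iff₀ (by positivity : (0:ℝ) < th1*th2)]
      nlinarith [mul_pos hth1 hth2]
    · rw [hq1s, hzsm2]; field_simp; ring
    · rw [hq2s, hzsm2]; field_simp; ring
    · ring
  · intro h
    have hl2 : mu22*m2 ≤ lam2 := by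
      by_contra hc
      push_neg at hc
      have hq2a0 : q2a = 0 := by
        rw [hq2a, max_eq_right (by linarith), zero_div]
      have hs2a' : s2a = m2 - lam2/mu22 := by
        rw [hs2a, max_eq_left]
        rw [sub_nonneg, div_le_iff₀ hmu22]; nlinarith
      rw [hq2a0, mul_zero] at h
      rw [hs2a'] at hAI
      have h1 : 0 < mu12 * (m2 - lam2/mu22) := by
        apply mul_pos hmu12
        rw [sub_pos, div_lt_iff₀ hmu22]; nlinarith
      have h2 : 0 < th1*(q1a - kap) := lt_of_lt_of_le h1 hAI
      have h3 : th1*(q1a - kap) ≤ 0 :=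
        mul_nonpos_of_nonneg_of_nonpos hth1.le (by linarith)
      linarith
    have hq2a' : q2a = (lam2 - mu22*m2)/th2 := by
      rw [hq2a, max_eq_left (by linarith)]
    rw [hq1a', hq2a', gt_iff_lt,
      show (lam1 - m1*mu11)/th1 - kap = (lam1 - m1*mu11 - kap*th1)/th1 by
        field_simp,
      show r*((lam2 - mu22*m2)/th2) = (r*(lam2 - mu22*m2))/th2 by ring,
      div_lt_div_iff₀ hth1 hth2] at h
    -- h : (lam1 - m1*mu11 - kap*th1)*th2 < r*(lam2 - mu22*m2)*th1
    have hzb0 : zb ≤ 0 := by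
      rw [hzb, div_nonpos_iff]
      right
      exact ⟨by linarith, le_of_lt hD⟩
    have hzs0 : zs = 0 := by
      rw [hzs, max_eq_right hzb0, min_eq_left hm2.le]
    refine ⟨hzs0, ?_, ?_, ?_, ?_, ?_, ?_, ?_, ?_⟩
    · rw [hpis, hzs0]; simp
    · rw [hq1s, hzs0]; ring_nf
    · rw [hq2s, hzs0]; ring_nf
    · rw [hq2s, hzs0]
      apply div_nonneg _ hth2.le; linarith
    · rw [hq1s, hq2s, hzs0,
        show (lam1 - m1*mu11 - mu12*0)/th1 - r*((lam2 - mu22*(m2 - 0))/th2)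
            = (th2*(lam1 - m1*mu11) - r*th1*(lam2 - mu22*m2))/(th1*th2) by
          field_simp; ring,
        div_lt_iff₀ (by positivity : (0:ℝ) < th1*th2)]
      linarith
    · rw [hq1s, hzs0]; field_simp; ring
    · rw [hq2s, hzs0]; field_simp; ring
    · ring
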